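/- Let ℓ(m) = ⌊log₂(m+1)⌋ denote the length of a natural number m. Let h, g, π : ℕ → ℕ, let p be a polynomial with natural-number coefficients, let c ∈ ℕ, and let t : ℕ → ℕ satisfy n ≤ t(n) for all n. Assume that for all x, h(π(x)) = g(x) and ℓ(π(x)) ≤ p.eval(ℓ(x)). If there are infinitely many n ∈ ℕ for which there exist x and y with g(x) = y, ℓ(x) ≤ c · t(n), and ℓ(z) ≥ 2^{t(n)} for every z with h(z) = y, then this yields a contradiction (such h, g, π, p cannot all exist). -/
import Mathlib

open Filter in
lemma natPoly_eventually_lt_two_pow (q : Polynomial ℕ) :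
    ∀ᶠ m in atTop, q.eval m < 2 ^ m := by
  set d := q.natDegree with hd
  set A := ∑ i ∈ Finset.range (d + 1), q.coeff i with hA
  have hbound : ∀ m : ℕ, 1 ≤ m → q.eval m ≤ A * m ^ d := by
    intro m hm
    rw [Polynomial.eval_eq_sum_range, hA, Finset.sum_mul]
    refine Finset.sum_le_sum fun i hi => ?_
    exact Nat.mul_le_mul_left _ (Nat.pow_le_pow_right hm (Nat.lt_succ_iff.mp
      (Finset.mem_range.mp hi)))
  have htend := tendsto_pow_const_div_const_pow_of_one_lt d (by norm_num : (1:ℝ) < 2)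
  have hev : ∀ᶠ m : ℕ in atTop, (m : ℝ) ^ d / 2 ^ m < 1 / (A + 1) := by
    refine htend.eventually (gt_mem_nhds ?_)
    positivity
  filter_upwards [hev, eventually_ge_atTop 1] with m hm hm1
  have h2 : (0:ℝ) < 2 ^ m := by positivity
  have hA1 : (0:ℝ) < (A:ℝ) + 1 := by positivity
  have : ((A:ℝ) + 1) * (m : ℝ) ^ d < 2 ^ m := by
    rw [div_lt_div_iff₀ h2 hA1] at hm
    linarith [hm]
  have hmd : (1:ℝ) ≤ (m:ℝ) ^ d := one_le_pow₀ (by exact_mod_cast hm1)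
  have hlt : (A:ℝ) * (m : ℝ) ^ d < 2 ^ m := by nlinarith
  have : ((q.eval m : ℕ) : ℝ) < 2 ^ m := by
    calc ((q.eval m : ℕ) : ℝ) ≤ ((A * m ^ d : ℕ) : ℝ) := by exact_mod_cast hbound m hm1
    _ = (A:ℝ) * (m:ℝ) ^ d := by push_cast; ring
    _ < 2 ^ m := hlt
  exact_mod_cast this

lemma natPoly_eval_mono (q : Polynomial ℕ) {a b : ℕ} (hab : a ≤ b) :
    q.eval a ≤ q.eval b := by
  rw [Polynomial.eval_eq_sum_range, Polynomial.eval_eq_sum_range]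
  exact Finset.sum_le_sum fun i _ => Nat.mul_le_mul_left _ (Nat.pow_le_pow_left hab i)

/-- The length of a natural number `m`: `ℓ(m) = ⌊log₂(m+1)⌋`. -/
def natLen (m : ℕ) : ℕ := Nat.log 2 (m + 1)

/-- The combinatorial kernel of the diagonalization: if `h` p-simulates `g` via a
simulation function `π` with polynomial length bound `p`, then it cannot be that
for infinitely many `n` there are `g`-proofs of length `≤ c·t(n)` of elements
whose shortest `h`-proofs have length `≥ 2^(t(n))`. -/
theorem no_short_simulation (h g π : ℕ → ℕ) (p : Polynomial ℕ) (c : ℕ)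
    (t : ℕ → ℕ) (ht : ∀ n, n ≤ t n)
    (hsim : ∀ x, h (π x) = g x)
    (hlen : ∀ x, natLen (π x) ≤ p.eval (natLen x))
    (hinf : {n : ℕ | ∃ x y, g x = y ∧ natLen x ≤ c * t n ∧
      ∀ z, h z = y → 2 ^ t n ≤ natLen z}.Infinite) :
    False := by
  set q : Polynomial ℕ := p.comp (Polynomial.C c * Polynomial.X) with hq
  have hqe : ∀ m, q.eval m = p.eval (c * m) := by
    intro m; simp [hq]
  obtain ⟨N, hN⟩ := Filter.eventually_atTop.mp (natPoly_eventually_lt_two_pow q)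
  obtain ⟨n, hn, hnN⟩ := hinf.exists_gt N
  obtain ⟨x, y, hgx, hx, hmin⟩ := hn
  have h1 : 2 ^ t n ≤ natLen (π x) := hmin _ (by rw [hsim, hgx])
  have h2 : natLen (π x) ≤ p.eval (c * t n) :=
    le_trans (hlen x) (natPoly_eval_mono p hx)
  have h3 : p.eval (c * t n) < 2 ^ t n := by
    rw [← hqe]
    exact hN _ (le_trans (le_trans hnN.le (ht n)) le_rfl)
  omega
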